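/- For all integers p ≥ 5 and k ≥ ⌊log₂(p−1)⌋, we have g^k_{⌊log₂(p−1)⌋}(p) ≥ 2^k + 1; that is, there exists a Gallai-k-coloring of the complete graph on 2^k vertices in which every set of p vertices spans edges in at least ⌊log₂(p−1)⌋ + 1 colors. -/

import Mathlib

open Finset

/-- A Gallai coloring: a symmetric edge-coloring of the complete graph on `V`
with no rainbow triangle. -/
def IsGallai {V β : Type*} (c : V → V → β) : Prop :=
  (∀ a b, c a b = c b a) ∧
  ∀ a b d : V, a ≠ b → a ≠ d → b ≠ d →
    ¬(c a b ≠ c a d ∧ c a b ≠ c b d ∧ c a d ≠ c b d)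

/-- The set of colors appearing on edges inside the vertex set `S`. -/
def colorsOn {V β : Type*} [DecidableEq V] [DecidableEq β]
    (c : V → V → β) (S : Finset V) : Finset β :=
  ((S ×ˢ S).filter fun p => p.1 ≠ p.2).image fun p => c p.1 p.2

/-- `gallaiNum k q p` is the smallest positive `n` such that every Gallai-`k`-coloring
of `K_n` contains a set of `p` vertices whose induced edges use at most `q` colors. -/
noncomputable def gallaiNum (k q p : ℕ) : ℕ :=
  sInf {n : ℕ | 0 < n ∧ ∀ c : Fin n → Fin n → Fin k, IsGallai c →
    ∃ S : Finset (Fin n), S.card = p ∧ (colorsOn c S).card ≤ q}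

lemma testBit_log_true {x : ℕ} (hx : x ≠ 0) : x.testBit (Nat.log 2 x) = true := by
  have h1 : 2 ^ Nat.log 2 x ≤ x := Nat.pow_log_le_self 2 hx
  have h2 : x < 2 ^ (Nat.log 2 x + 1) := Nat.lt_pow_succ_log_self (by norm_num) x
  rw [Nat.testBit_eq_decide_div_mod_eq]
  have hdiv : x / 2 ^ Nat.log 2 x = 1 := by
    rw [pow_succ] at h2
    exact Nat.div_eq_of_lt_le (by omega) (by omega)
  simp [hdiv]

lemma log_xor_eq {x y : ℕ} (hx : x ≠ 0) (h : Nat.log 2 x < Nat.log 2 y) :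
    Nat.log 2 (x ^^^ y) = Nat.log 2 y := by
  have hy : y ≠ 0 := by
    rintro rfl; simp [Nat.log_zero_right] at h
  set L := Nat.log 2 y with hL
  have hxlt : x < 2 ^ L := by
    calc x < 2 ^ (Nat.log 2 x + 1) := Nat.lt_pow_succ_log_self (by norm_num) x
    _ ≤ 2 ^ L := Nat.pow_le_pow_right (by norm_num) h
  have hylt : y < 2 ^ (L + 1) := Nat.lt_pow_succ_log_self (by norm_num) y
  have htb : (x ^^^ y).testBit L = true := by
    rw [Nat.testBit_xor, Nat.testBit_lt_two_pow hxlt, testBit_log_true hy]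
    rfl
  have hge : 2 ^ L ≤ x ^^^ y := Nat.ge_two_pow_of_testBit htb
  have hlt : x ^^^ y < 2 ^ (L + 1) :=
    Nat.xor_lt_two_pow (lt_trans hxlt (Nat.pow_lt_pow_succ (by norm_num))) hylt
  exact Nat.log_eq_of_pow_le_of_lt_pow hge hlt

def gcol (k : ℕ) (hk : 0 < k) (a b : Fin (2 ^ k)) : Fin k :=
  ⟨Nat.log 2 (a.val ^^^ b.val), by
    rcases eq_or_ne (a.val ^^^ b.val) 0 with h | h
    · simp [h, hk]
    · exact (Nat.log_lt_iff_lt_pow (by norm_num) h).mpr (Nat.xor_lt_two_pow a.isLt b.isLt)⟩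

lemma gcol_isGallai (k : ℕ) (hk : 0 < k) : IsGallai (gcol k hk) := by
  constructor
  · intro a b; simp [gcol, Nat.xor_comm]
  · intro a b d hab had hbd ⟨h1, h2, h3⟩
    have hx : a.val ^^^ b.val ≠ 0 := by
      simpa [xor_eq_zero_iff, Fin.val_eq_val] using hab
    have hy : a.val ^^^ d.val ≠ 0 := by
      simpa [xor_eq_zero_iff, Fin.val_eq_val] using had
    have hz : (a.val ^^^ b.val) ^^^ (a.val ^^^ d.val) = b.val ^^^ d.val := by
      rw [Nat.xor_comm a.val b.val, Nat.xor_assoc, ← Nat.xor_assoc a.val, Nat.xor_self,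
        Nat.zero_xor]
    simp only [gcol, ne_eq, Fin.mk.injEq] at h1 h2 h3
    rcases lt_trichotomy (Nat.log 2 (a.val ^^^ b.val)) (Nat.log 2 (a.val ^^^ d.val)) with h | h | h
    · exact h3 (by rw [← hz, log_xor_eq hx h])
    · exact h1 h
    · exact h2 (by rw [← hz, Nat.xor_comm (a.val ^^^ b.val), log_xor_eq hy h])

lemma gcol_count {k : ℕ} (hk : 0 < k) (S : Finset (Fin (2 ^ k))) :
    S.card ≤ 2 ^ (colorsOn (gcol k hk) S).card := by
  classical
  set T := colorsOn (gcol k hk) S with hT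
  have := Finset.card_le_card_of_injOn
    (f := fun v : Fin (2 ^ k) => T.filter (fun i => v.val.testBit i.val))
    (s := S) (t := T.powerset) ?_ ?_
  · simpa using this
  · intro v _; exact Finset.mem_powerset.mpr (Finset.filter_subset _ _)
  · intro v hv w hw hfw
    by_contra hne
    have hvw : v.val ^^^ w.val ≠ 0 := by
      simpa [xor_eq_zero_iff, Fin.val_eq_val] using hne
    set i := gcol k hk v w with hi
    have hiT : i ∈ T := by
      rw [hT, colorsOn]
      exact Finset.mem_image.mpr ⟨(v, w), Finset.mem_filter.mpr
        ⟨Finset.mem_product.mpr ⟨hv, hw⟩, hne⟩, rfl⟩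
    have htb : (v.val ^^^ w.val).testBit i.val = true := by
      have : (i : ℕ) = Nat.log 2 (v.val ^^^ w.val) := rfl
      rw [this]; exact testBit_log_true hvw
    rw [Nat.testBit_xor] at htb
    have hfw2 : T.filter (fun j => v.val.testBit j.val) =
        T.filter (fun j => w.val.testBit j.val) := hfw
    have hmem : (i ∈ T.filter (fun j => v.val.testBit j.val)) ↔
        (i ∈ T.filter (fun j => w.val.testBit j.val)) := by rw [hfw2]
    simp only [Finset.mem_filter, hiT, true_and] at hmem
    rcases Bool.eq_false_or_eq_true (v.val.testBit i.val) with h | h <;>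
      rcases Bool.eq_false_or_eq_true (w.val.testBit i.val) with h' | h' <;>
      simp [h, h'] at htb hmem

lemma ramsey_aux {n k : ℕ} (hk : 0 < k) (c : Fin n → Fin n → Fin k) :
    ∀ (m : ℕ) (A : Finset (Fin n)), (k + 1) ^ m ≤ A.card →
    ∃ (T : Finset (Fin n)) (g : Fin n → Fin k), T ⊆ A ∧ T.card = m ∧
      ∀ x ∈ T, ∀ y ∈ T, x < y → c x y = g x := by
  intro m
  induction m with
  | zero => exact fun A _ => ⟨∅, fun _ => ⟨0, hk⟩, by simp⟩
  | succ m ih =>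
    intro A hA
    have hpow : 1 ≤ (k + 1) ^ m := Nat.one_le_pow _ _ (by omega)
    have hAne : A.Nonempty := by
      rw [← Finset.card_pos]
      have : 1 ≤ (k + 1) ^ (m + 1) := Nat.one_le_pow _ _ (by omega)
      omega
    set v := A.min' hAne with hv
    have hvA : v ∈ A := A.min'_mem hAne
    set A' := A.erase v with hA'
    have hA'card : k * (k + 1) ^ m ≤ A'.card := by
      have h1 : A'.card = A.card - 1 := by rw [hA', Finset.card_erase_of_mem hvA]
      have h2 : (k + 1) ^ (m + 1) = k * (k + 1) ^ m + (k + 1) ^ m := by ring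
      omega
    obtain ⟨i, -, hi⟩ := Finset.exists_le_card_fiber_of_mul_le_card_of_maps_to
      (f := fun w => c v w) (s := A') (t := Finset.univ)
      (fun a _ => Finset.mem_univ _)
      (@Finset.univ_nonempty (Fin k) _ ⟨⟨0, hk⟩⟩)
      (by simpa using hA'card)
    obtain ⟨T', g', hT'B, hT'card, hT'prop⟩ := ih (A'.filter fun w => c v w = i) hi
    have hT'A' : T' ⊆ A' := hT'B.trans (Finset.filter_subset _ _)
    have hvT' : v ∉ T' := fun h => (Finset.mem_erase.mp (hT'A' h)).1 rfl
    refine ⟨insert v T', Function.update g' v i, ?_, ?_, ?_⟩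
    · exact Finset.insert_subset hvA (hT'A'.trans (A.erase_subset v))
    · rw [Finset.card_insert_of_notMem hvT', hT'card]
    · intro x hx y hy hxy
      rcases Finset.mem_insert.mp hx with rfl | hx'
      · rcases Finset.mem_insert.mp hy with rfl | hy'
        · exact absurd hxy (lt_irrefl _)
        · rw [Function.update_self]
          exact (Finset.mem_filter.mp (hT'B hy')).2
      · have hxv : x ≠ v := fun h => hvT' (h ▸ hx')
        rw [Function.update_of_ne hxv]
        rcases Finset.mem_insert.mp hy with rfl | hy'
        · exact absurd (A.min'_le x (A.erase_subset _ (hT'A' hx'))) (not_le.mpr hxy)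
        · exact hT'prop x hx' y hy' hxy

lemma mem_ramsey_set {k q p : ℕ} (hk : 0 < k) (hq : 1 ≤ q) :
    0 < (k + 1) ^ (k * p) ∧
    ∀ c : Fin ((k + 1) ^ (k * p)) → Fin ((k + 1) ^ (k * p)) → Fin k, IsGallai c →
      ∃ S : Finset (Fin ((k + 1) ^ (k * p))), S.card = p ∧ (colorsOn c S).card ≤ q := by
  refine ⟨Nat.pow_pos (by omega), fun c hc => ?_⟩
  obtain ⟨T, g, -, hTcard, hTprop⟩ := ramsey_aux hk c (k * p) Finset.univ
    (by simp)
  obtain ⟨i, -, hi⟩ := Finset.exists_le_card_fiber_of_mul_le_card_of_maps_to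
    (f := g) (s := T) (t := Finset.univ) (n := p) (fun a _ => Finset.mem_univ _)
    (@Finset.univ_nonempty (Fin k) _ ⟨⟨0, hk⟩⟩)
    (by simp [hTcard, Nat.mul_comm])
  obtain ⟨S, hSF, hScard⟩ := Finset.exists_subset_card_eq hi
  refine ⟨S, hScard, ?_⟩
  have hsub : colorsOn c S ⊆ {i} := by
    intro col hcol
    obtain ⟨⟨x, y⟩, hxy, rfl⟩ := Finset.mem_image.mp hcol
    obtain ⟨hxyS, hne⟩ := Finset.mem_filter.mp hxy
    obtain ⟨hxS, hyS⟩ := Finset.mem_product.mp hxyS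
    have hx := Finset.mem_filter.mp (hSF hxS)
    have hy := Finset.mem_filter.mp (hSF hyS)
    rcases lt_or_gt_of_ne hne with h | h
    · rw [Finset.mem_singleton, hTprop x hx.1 y hy.1 h, hx.2]
    · rw [Finset.mem_singleton, hc.1 x y, hTprop y hy.1 x hx.1 h, hy.2]
  calc (colorsOn c S).card ≤ ({i} : Finset (Fin k)).card := Finset.card_le_card hsub
  _ ≤ q := by simpa using hq

theorem gallaiNum_log_lower (p k : ℕ) (hp : 5 ≤ p) (hk : Nat.log 2 (p - 1) ≤ k) :
    2 ^ k + 1 ≤ gallaiNum k (Nat.log 2 (p - 1)) p ∧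
    ∃ c : Fin (2 ^ k) → Fin (2 ^ k) → Fin k, IsGallai c ∧
      ∀ S : Finset (Fin (2 ^ k)), S.card = p →
        Nat.log 2 (p - 1) + 1 ≤ (colorsOn c S).card := by
  have hq2 : 2 ≤ Nat.log 2 (p - 1) := by
    have h4 : Nat.log 2 4 = 2 := Nat.log_eq_of_pow_le_of_lt_pow (by norm_num) (by norm_num)
    calc 2 = Nat.log 2 4 := h4.symm
    _ ≤ Nat.log 2 (p - 1) := Nat.log_mono_right (by omega)
  have hk0 : 0 < k := by omega
  have key : ∀ S : Finset (Fin (2 ^ k)), S.card = p →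
      Nat.log 2 (p - 1) + 1 ≤ (colorsOn (gcol k hk0) S).card := by
    intro S hS
    have hcount := gcol_count hk0 S
    rw [hS] at hcount
    have hlt : p - 1 < 2 ^ (colorsOn (gcol k hk0) S).card := by omega
    have := (Nat.log_lt_iff_lt_pow (by norm_num) (by omega : p - 1 ≠ 0)).mpr hlt
    omega
  refine ⟨?_, gcol k hk0, gcol_isGallai k hk0, key⟩
  rw [gallaiNum]
  apply le_csInf ⟨(k + 1) ^ (k * p), mem_ramsey_set hk0 (by omega)⟩
  rintro n ⟨hn0, hcond⟩
  by_contra hcon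
  push_neg at hcon
  have hle : n ≤ 2 ^ k := by omega
  set c' : Fin n → Fin n → Fin k :=
    fun a b => gcol k hk0 (Fin.castLE hle a) (Fin.castLE hle b) with hc'
  have hinj : Function.Injective (Fin.castLE hle) := Fin.castLE_injective hle
  have hG : IsGallai c' := by
    refine ⟨fun a b => (gcol_isGallai k hk0).1 _ _, fun a b d hab had hbd => ?_⟩
    exact (gcol_isGallai k hk0).2 _ _ _ (hinj.ne hab) (hinj.ne had) (hinj.ne hbd)
  obtain ⟨S, hScard, hScol⟩ := hcond c' hG
  set S' := S.image (Fin.castLE hle) with hS'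
  have hS'card : S'.card = p := by
    rw [hS', Finset.card_image_of_injective _ hinj, hScard]
  have hsub : colorsOn (gcol k hk0) S' ⊆ colorsOn c' S := by
    intro col hcol
    obtain ⟨⟨x', y'⟩, hxy, rfl⟩ := Finset.mem_image.mp hcol
    obtain ⟨hxyS, hne⟩ := Finset.mem_filter.mp hxy
    obtain ⟨hxS, hyS⟩ := Finset.mem_product.mp hxyS
    obtain ⟨x, hx, rfl⟩ := Finset.mem_image.mp hxS
    obtain ⟨y, hy, rfl⟩ := Finset.mem_image.mp hyS
    exact Finset.mem_image.mpr ⟨(x, y), Finset.mem_filter.mpr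
      ⟨Finset.mem_product.mpr ⟨hx, hy⟩, fun h => hne (congrArg (Fin.castLE hle) h)⟩, rfl⟩
  have := key S' hS'card
  have := Finset.card_le_card hsub
  omega
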